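/- For α ∈ ℝ with α ≠ 0 and α ≠ 1, and strictly positive probability vectors P_1, …, P_N on a nonempty finite set A, define q*(a) = (Σ_{i=1}^N P_i(a)^α)^{1/α} / Σ_{a'∈A} (Σ_{i=1}^N P_i(a')^α)^{1/α}. Then q* minimizes the total α-Renyi-variant distance among strictly positive probability vectors: for every strictly positive probability vector q on A, Σ_{i=1}^N d_α(P_i, q*) ≤ Σ_{i=1}^N d_α(P_i, q). -/

import Mathlib

open Finset

/-- A strictly positive probability vector on a finite set. -/
def IsPosProbVec {A : Type*} [Fintype A] (q : A → ℝ) : Prop :=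
  (∀ a, 0 < q a) ∧ ∑ a, q a = 1

/-- The α-Renyi-variant distance
`d_α(p,q) = sgn(α)·(1/(1−α))·(1 − Σ_a p(a)^α q(a)^(1−α))`. -/
noncomputable def dRenyi {A : Type*} [Fintype A] (α : ℝ) (p q : A → ℝ) : ℝ :=
  Real.sign α * (1 / (1 - α)) * (1 - ∑ a, (p a) ^ α * (q a) ^ (1 - α))

open Finset

/-- Bernoulli-based: for `1 ≤ β` and pos prob vecs, `1 ≤ ∑ p^β q^(1-β)`. -/
lemma sum_rpow_ge {A : Type*} [Fintype A] {β : ℝ} (hβ : 1 ≤ β)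
    {p q : A → ℝ} (hp : (∀ a, 0 < p a) ∧ ∑ a, p a = 1)
    (hq : (∀ a, 0 < q a) ∧ ∑ a, q a = 1) :
    1 ≤ ∑ a, (p a) ^ β * (q a) ^ (1 - β) := by
  have key : ∀ a, q a + β * (p a - q a) ≤ (p a) ^ β * (q a) ^ (1 - β) := by
    intro a
    have hpa := hp.1 a
    have hqa := hq.1 a
    have hs : (-1 : ℝ) ≤ p a / q a - 1 := by
      have : 0 < p a / q a := div_pos hpa hqa
      linarith
    have hb := one_add_mul_self_le_rpow_one_add hs hβ
    have h1 : 1 + (p a / q a - 1) = p a / q a := by ring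
    rw [h1] at hb
    have hb2 := mul_le_mul_of_nonneg_left hb hqa.le
    have hL : q a * (1 + β * (p a / q a - 1)) = q a + β * (p a - q a) := by
      field_simp
    have hR : q a * (p a / q a) ^ β = (p a) ^ β * (q a) ^ (1 - β) := by
      rw [Real.div_rpow hpa.le hqa.le, Real.rpow_sub hqa, Real.rpow_one]
      field_simp
    rw [hL, hR] at hb2
    exact hb2
  calc (1 : ℝ) = ∑ a, (q a + β * (p a - q a)) := by
        rw [Finset.sum_add_distrib, ← Finset.mul_sum, Finset.sum_sub_distrib,
          hp.2, hq.2]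
        ring
    _ ≤ _ := Finset.sum_le_sum fun a _ => key a

lemma sum_rpow_le {A : Type*} [Fintype A] {α : ℝ} (h0 : 0 < α) (h1 : α < 1)
    {p q : A → ℝ} (hp : (∀ a, 0 < p a) ∧ ∑ a, p a = 1)
    (hq : (∀ a, 0 < q a) ∧ ∑ a, q a = 1) :
    ∑ a, (p a) ^ α * (q a) ^ (1 - α) ≤ 1 := by
  calc ∑ a, (p a) ^ α * (q a) ^ (1 - α)
      ≤ ∑ a, (α * p a + (1 - α) * q a) := by
        refine Finset.sum_le_sum fun a _ => ?_
        exact Real.geom_mean_le_arith_mean2_weighted h0.le (by linarith)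
          (hp.1 a).le (hq.1 a).le (by ring)
    _ = 1 := by
        rw [Finset.sum_add_distrib, ← Finset.mul_sum, ← Finset.mul_sum, hp.2, hq.2]
        ring

lemma dRenyi_nonneg {A : Type*} [Fintype A] {α : ℝ} (hα0 : α ≠ 0) (hα1 : α ≠ 1)
    {p q : A → ℝ} (hp : IsPosProbVec p) (hq : IsPosProbVec q) :
    0 ≤ dRenyi α p q := by
  unfold dRenyi
  rcases lt_trichotomy α 0 with hneg | hz | hpos
  · -- α < 0 : sign = -1, 1 - α > 0, sum ≥ 1
    have hsum : 1 ≤ ∑ a, (p a) ^ α * (q a) ^ (1 - α) := by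
      have := sum_rpow_ge (β := 1 - α) (by linarith) hq hp
      have he : ∀ a, (q a) ^ (1 - α) * (p a) ^ (1 - (1 - α)) =
          (p a) ^ α * (q a) ^ (1 - α) := by
        intro a; rw [show 1 - (1 - α) = α by ring]; ring
      rwa [Finset.sum_congr rfl fun a _ => he a] at this
    rw [Real.sign_of_neg hneg]
    have h1 : 0 < 1 - α := by linarith
    have h2 : 1 - ∑ a, (p a) ^ α * (q a) ^ (1 - α) ≤ 0 := by linarith
    have h3 : 0 < 1 / (1 - α) := by positivity
    nlinarith
  · exact absurd hz hα0
  · rcases lt_trichotomy α 1 with hlt | he | hgt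
    · have hsum := sum_rpow_le hpos hlt hp hq
      rw [Real.sign_of_pos hpos]
      have h3 : 0 < 1 / (1 - α) := by
        have : 0 < 1 - α := by linarith
        positivity
      nlinarith
    · exact absurd he hα1
    · have hsum : 1 ≤ ∑ a, (p a) ^ α * (q a) ^ (1 - α) :=
        sum_rpow_ge hgt.le hp hq
      rw [Real.sign_of_pos hpos]
      have h3 : 1 / (1 - α) < 0 := by
        apply div_neg_of_pos_of_neg one_pos; linarith
      nlinarith
/-- The `Agg-p_α` pooled opinion minimizes the total α-Renyi-variant distance over
strictly positive probability vectors. -/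
theorem stmt2 {A : Type*} [Fintype A] [Nonempty A] (N : ℕ) (hN : 1 ≤ N)
    (α : ℝ) (hα0 : α ≠ 0) (hα1 : α ≠ 1)
    (P : Fin N → A → ℝ) (hP : ∀ i, IsPosProbVec (P i))
    (qstar : A → ℝ)
    (hqstar : ∀ a, qstar a =
      (∑ i, (P i a) ^ α) ^ (1 / α) / ∑ a', (∑ i, (P i a') ^ α) ^ (1 / α)) :
    ∀ q : A → ℝ, IsPosProbVec q →
      ∑ i, dRenyi α (P i) qstar ≤ ∑ i, dRenyi α (P i) q := by
  intro q hq
  have hFin : Nonempty (Fin N) := Fin.pos_iff_nonempty.mp (by omega)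
  set w : A → ℝ := fun a => ∑ i, (P i a) ^ α with hw_def
  have hw : ∀ a, 0 < w a := fun a =>
    Finset.sum_pos (fun i _ => Real.rpow_pos_of_pos ((hP i).1 a) α)
      Finset.univ_nonempty
  set S : ℝ := ∑ a', (w a') ^ (1 / α) with hS_def
  have hS : 0 < S :=
    Finset.sum_pos (fun a _ => Real.rpow_pos_of_pos (hw a) _) Finset.univ_nonempty
  have hqs_pos : ∀ a, 0 < qstar a := by
    intro a; rw [hqstar a]
    exact div_pos (Real.rpow_pos_of_pos (hw a) _) hS
  have hqs_sum : ∑ a, qstar a = 1 := by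
    have : ∑ a, qstar a = (∑ a, (w a) ^ (1 / α)) / S := by
      rw [Finset.sum_div]
      exact Finset.sum_congr rfl fun a _ => hqstar a
    rw [this, ← hS_def, div_self hS.ne']
  have hkey : ∀ a, w a = S ^ α * (qstar a) ^ α := by
    intro a
    have h1 : S * qstar a = (w a) ^ (1 / α) := by
      rw [hqstar a]; field_simp; rfl
    have h2 : ((w a) ^ (1 / α)) ^ α = w a := by
      rw [← Real.rpow_mul (hw a).le, one_div_mul_cancel hα0, Real.rpow_one]
    rw [← h2, ← h1, Real.mul_rpow hS.le (hqs_pos a).le]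
  have hsum : ∀ r : A → ℝ, ∑ i, dRenyi α (P i) r =
      Real.sign α * (1 / (1 - α)) *
        ((N : ℝ) - S ^ α * ∑ a, (qstar a) ^ α * (r a) ^ (1 - α)) := by
    intro r
    unfold dRenyi
    rw [← Finset.mul_sum]
    congr 1
    rw [Finset.sum_sub_distrib, Finset.sum_const, Finset.card_univ,
      Fintype.card_fin, nsmul_eq_mul, mul_one]
    congr 1
    rw [Finset.sum_comm, Finset.mul_sum]
    refine Finset.sum_congr rfl fun a _ => ?_
    rw [← Finset.sum_mul]
    show w a * (r a) ^ (1 - α) = S ^ α * ((qstar a) ^ α * (r a) ^ (1 - α))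
    rw [hkey a]; ring
  have hTstar : ∑ a, (qstar a) ^ α * (qstar a) ^ (1 - α) = 1 := by
    have he : ∀ a, (qstar a) ^ α * (qstar a) ^ (1 - α) = qstar a := fun a => by
      rw [← Real.rpow_add (hqs_pos a), show α + (1 - α) = 1 by ring, Real.rpow_one]
    rw [Finset.sum_congr rfl fun a _ => he a, hqs_sum]
  have h0 := dRenyi_nonneg hα0 hα1 ⟨hqs_pos, hqs_sum⟩ hq
  unfold dRenyi at h0
  have hSα : 0 < S ^ α := Real.rpow_pos_of_pos hS α
  rw [hsum qstar, hsum q, hTstar]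
  nlinarith [mul_nonneg hSα.le h0]
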